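/- arXiv:1502.02313 — 2 statements merged into one kernel-verified Lean document; each statement's English description precedes it below -/
import Mathlib

section
/- Let b : [0,T) → End(V) be a differentiable family of endomorphisms of an m-dimensional real inner product space satisfying the Riccati equation b' = -R - b², where R(t) is self-adjoint for each t. If b(0) is self-adjoint then b(t) is self-adjoint for all t. Moreover the trace θ = tr b satisfies θ' = -tr R - tr(σ²) - θ²/m, where σ is the trace-free part of b. -/
open ContinuousLinearMap in
theorem stmt_6_aux_sa {V : Type*} [NormedAddCommGroup V] [InnerProductSpace ℝ V]
    [FiniteDimensional ℝ V]
    (T : ℝ) (R b : ℝ → V →L[ℝ] V)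
    (hRsa : ∀ t ∈ Set.Ico (0 : ℝ) T, ∀ x y : V,
      (inner ℝ (R t x) y : ℝ) = inner ℝ x (R t y))
    (hode : ∀ t ∈ Set.Ico (0 : ℝ) T,
      HasDerivAt b (-(R t) - (b t).comp (b t)) t)
    (hb0 : ∀ x y : V, (inner ℝ (b 0 x) y : ℝ) = inner ℝ x (b 0 y)) :
    ∀ t ∈ Set.Ico (0 : ℝ) T, b t = adjoint (b t) := by
  intro t₀ ht₀
  -- the map L ↦ L - L†, as a continuous linear map
  have hsmul : ∀ (c : ℝ) (L : V →L[ℝ] V), adjoint (c • L) = c • adjoint L := by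
    intro c L
    simp
  let ψlin : (V →L[ℝ] V) →ₗ[ℝ] (V →L[ℝ] V) :=
    { toFun := fun L => L - adjoint L
      map_add' := by intro x y; simp; abel
      map_smul' := by intro c L; simp [hsmul, smul_sub] }
  let ψ : (V →L[ℝ] V) →L[ℝ] (V →L[ℝ] V) := ψlin.toContinuousLinearMap
  set A : ℝ → (V →L[ℝ] V) := fun s => b s - adjoint (b s) with hA
  have hRadj : ∀ s ∈ Set.Ico (0 : ℝ) T, adjoint (R s) = R s := by
    intro s hs
    symm
    rw [eq_adjoint_iff]
    exact hRsa s hs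
  have hA' : ∀ s ∈ Set.Ico (0 : ℝ) T,
      HasDerivAt A (-((b s).comp (A s) + (A s).comp (adjoint (b s)))) s := by
    intro s hs
    have h1 : HasDerivAt A (ψ (-(R s) - (b s).comp (b s))) s :=
      ψ.hasFDerivAt.comp_hasDerivAt s (hode s hs)
    convert h1 using 1
    have : ψ (-(R s) - (b s).comp (b s))
        = (-(R s) - (b s).comp (b s)) - adjoint (-(R s) - (b s).comp (b s)) := rfl
    rw [this, map_sub, map_neg, hRadj s hs, adjoint_comp]
    simp only [hA, comp_sub, sub_comp]
    abel
  have hsub : Set.Icc (0:ℝ) t₀ ⊆ Set.Ico (0:ℝ) T := fun s hs =>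
    ⟨hs.1, lt_of_le_of_lt hs.2 ht₀.2⟩
  have hbc : ContinuousOn b (Set.Icc 0 t₀) := fun s hs =>
    ((hode s (hsub hs)).continuousAt).continuousWithinAt
  obtain ⟨C, hC⟩ := (isCompact_Icc (a := (0:ℝ)) (b := t₀)).exists_bound_of_continuousOn hbc
  have hAc : ContinuousOn A (Set.Icc 0 t₀) := fun s hs =>
    (ψ.continuous.continuousAt.comp ((hode s (hsub hs)).continuousAt)).continuousWithinAt
  have key := norm_le_gronwallBound_of_norm_deriv_right_le (f := A)
    (f' := fun s => -((b s).comp (A s) + (A s).comp (adjoint (b s))))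
    (δ := 0) (K := 2 * C) (ε := 0) (a := 0) (b := t₀) hAc
    (fun s hs => (hA' s (hsub (Set.Ico_subset_Icc_self hs))).hasDerivWithinAt)
    (by simp [hA, hb0, eq_adjoint_iff (b 0) (b 0) |>.mpr hb0 |>.symm])
    ?_ t₀ (Set.right_mem_Icc.mpr ht₀.1)
  · rw [gronwallBound_ε0_δ0] at key
    have : A t₀ = 0 := by
      have := le_antisymm key (norm_nonneg _)
      exact norm_eq_zero.mp this
    have := sub_eq_zero.mp this
    exact this
  · intro s hs
    have hsIcc := Set.Ico_subset_Icc_self hs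
    have hCb : ‖b s‖ ≤ C := hC s hsIcc
    have hC0 : 0 ≤ C := le_trans (norm_nonneg _) hCb
    have hadj : ‖adjoint (b s)‖ = ‖b s‖ := by
      exact (LinearIsometryEquiv.norm_map _ _)
    calc ‖-((b s).comp (A s) + (A s).comp (adjoint (b s)))‖
        ≤ ‖(b s).comp (A s)‖ + ‖(A s).comp (adjoint (b s))‖ := by
          rw [norm_neg]; exact norm_add_le _ _
      _ ≤ ‖b s‖ * ‖A s‖ + ‖A s‖ * ‖adjoint (b s)‖ :=
          add_le_add (opNorm_comp_le _ _) (opNorm_comp_le _ _)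
      _ ≤ C * ‖A s‖ + ‖A s‖ * C := by
          gcongr
          rw [hadj]; exact hCb
      _ = 2 * C * ‖A s‖ + 0 := by ring

/-- For the Riccati equation b' = -R - b² with R(t) self-adjoint and b(0)
self-adjoint, b(t) stays self-adjoint, and the trace θ = tr b satisfies the
Raychaudhuri equation θ' = -tr R - tr(σ²) - θ²/m where σ is the trace-free part of b. -/
theorem stmt_6 {V : Type*} [NormedAddCommGroup V] [InnerProductSpace ℝ V]
    [FiniteDimensional ℝ V] (m : ℕ) (hm : Module.finrank ℝ V = m) (hm0 : 0 < m)
    (T : ℝ) (R b : ℝ → V →L[ℝ] V) (hRcont : Continuous R)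
    (hRsa : ∀ t ∈ Set.Ico (0 : ℝ) T, ∀ x y : V,
      (inner ℝ (R t x) y : ℝ) = inner ℝ x (R t y))
    (hode : ∀ t ∈ Set.Ico (0 : ℝ) T,
      HasDerivAt b (-(R t) - (b t).comp (b t)) t)
    (hb0 : ∀ x y : V, (inner ℝ (b 0 x) y : ℝ) = inner ℝ x (b 0 y)) :
    (∀ t ∈ Set.Ico (0 : ℝ) T, ∀ x y : V,
      (inner ℝ (b t x) y : ℝ) = inner ℝ x (b t y)) ∧
    ∀ t ∈ Set.Ico (0 : ℝ) T,
      HasDerivAt (fun s => LinearMap.trace ℝ V (b s : V →ₗ[ℝ] V))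
        (-(LinearMap.trace ℝ V (R t : V →ₗ[ℝ] V))
          - LinearMap.trace ℝ V
              (((b t : V →ₗ[ℝ] V)
                  - (LinearMap.trace ℝ V (b t : V →ₗ[ℝ] V) / (m : ℝ)) • LinearMap.id) ∘ₗ
               ((b t : V →ₗ[ℝ] V)
                  - (LinearMap.trace ℝ V (b t : V →ₗ[ℝ] V) / (m : ℝ)) • LinearMap.id))
          - (LinearMap.trace ℝ V (b t : V →ₗ[ℝ] V)) ^ 2 / (m : ℝ)) t := by
  constructor
  · intro t ht x y
    have h := stmt_6_aux_sa T R b hRsa hode hb0 t ht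
    nth_rewrite 1 [h]
    exact ContinuousLinearMap.adjoint_inner_left (b t) y x
  · intro t ht
    -- trace as a continuous linear functional
    let φlin : (V →L[ℝ] V) →ₗ[ℝ] ℝ :=
      (LinearMap.trace ℝ V).comp (ContinuousLinearMap.coeLM ℝ)
    let φ : (V →L[ℝ] V) →L[ℝ] ℝ := φlin.toContinuousLinearMap
    have h1 : HasDerivAt (fun s => LinearMap.trace ℝ V (b s : V →ₗ[ℝ] V))
        (φ (-(R t) - (b t).comp (b t))) t :=
      φ.hasFDerivAt.comp_hasDerivAt t (hode t ht)
    convert h1 using 1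
    have hφ : φ (-(R t) - (b t).comp (b t))
        = -(LinearMap.trace ℝ V (R t : V →ₗ[ℝ] V))
          - LinearMap.trace ℝ V ((b t : V →ₗ[ℝ] V) ∘ₗ (b t : V →ₗ[ℝ] V)) := by
      show LinearMap.trace ℝ V ((-(R t) - (b t).comp (b t) : V →L[ℝ] V) : V →ₗ[ℝ] V) = _
      push_cast [ContinuousLinearMap.coe_sub, ContinuousLinearMap.coe_neg,
        ContinuousLinearMap.coe_comp, map_sub, map_neg]
      rfl
    rw [hφ]
    set B : V →ₗ[ℝ] V := (b t : V →ₗ[ℝ] V)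
    set θ : ℝ := LinearMap.trace ℝ V B
    have hexp : ((B - (θ / m) • LinearMap.id) ∘ₗ (B - (θ / m) • LinearMap.id))
        = B ∘ₗ B - (θ / m) • B - (θ / m) • B + ((θ/m) * (θ/m)) • LinearMap.id := by
      simp only [LinearMap.sub_comp, LinearMap.comp_sub, LinearMap.smul_comp,
        LinearMap.comp_smul, LinearMap.id_comp, LinearMap.comp_id, smul_smul, smul_sub]
      abel
    have htrid : LinearMap.trace ℝ V (LinearMap.id : V →ₗ[ℝ] V) = (m : ℝ) := by
      rw [LinearMap.trace_id, hm]
    have hm0' : (m : ℝ) ≠ 0 := Nat.cast_ne_zero.mpr hm0.ne'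
    rw [hexp]
    simp only [map_add, map_sub, map_smul, htrid, smul_eq_mul]
    field_simp
    ring
end

section
/- Suppose f : [a, ∞) → ℝ is C¹ and σ : [a,∞) → ℝ with σ ≥ 0, f' ≤ -σ - f²/k for a constant k > 0 (Raychaudhuri inequality with nonnegative Ricci and shear terms). If f(t₀) < 0 for some t₀ ≥ a, then f is not defined/finite on all of [a, ∞): there exists t₁ ≤ t₀ + k/(-f(t₀)) at which no C¹ extension of f satisfying the inequality can exist. -/
/-- Raychaudhuri inequality f' ≤ -σ - f²/k with σ ≥ 0 and f(t₀) < 0 implies the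
maximal domain [a,T) is bounded: T ≤ t₀ + k/(-f(t₀)). -/
theorem stmt_14 (k a T t₀ : ℝ) (hk : 0 < k) (f σ : ℝ → ℝ)
    (hσ : ∀ t ∈ Set.Ico a T, 0 ≤ σ t)
    (hdiff : ∀ t ∈ Set.Ico a T, DifferentiableAt ℝ f t)
    (hineq : ∀ t ∈ Set.Ico a T, deriv f t ≤ -σ t - (f t) ^ 2 / k)
    (ht₀ : t₀ ∈ Set.Ico a T) (hf : f t₀ < 0) :
    T ≤ t₀ + k / (-f t₀) := by
  by_contra h
  push_neg at h
  set t₁ := t₀ + k / (-f t₀) with ht₁def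
  have ht₀a : a ≤ t₀ := ht₀.1
  have ht₀T : t₀ < T := ht₀.2
  have hpos : 0 < k / (-f t₀) := div_pos hk (by linarith)
  have ht₀t₁ : t₀ < t₁ := by simp only [ht₁def]; linarith
  have hsub : Set.Icc t₀ t₁ ⊆ Set.Ico a T := fun x hx =>
    ⟨le_trans ht₀a hx.1, lt_of_le_of_lt hx.2 h⟩
  have hcont : ContinuousOn f (Set.Icc t₀ t₁) := fun x hx =>
    ((hdiff x (hsub hx)).continuousAt).continuousWithinAt
  have hanti : AntitoneOn f (Set.Icc t₀ t₁) := by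
    apply antitoneOn_of_deriv_nonpos (convex_Icc _ _) hcont
    · intro x hx
      rw [interior_Icc] at hx
      exact (hdiff x (hsub (Set.Ioo_subset_Icc_self hx))).differentiableWithinAt
    · intro x hx
      rw [interior_Icc] at hx
      have hm := hsub (Set.Ioo_subset_Icc_self hx)
      have h1 := hineq x hm
      have h2 := hσ x hm
      have h3 : 0 ≤ (f x) ^ 2 / k := div_nonneg (sq_nonneg _) hk.le
      linarith
  have hfneg : ∀ x ∈ Set.Icc t₀ t₁, f x < 0 := fun x hx =>
    lt_of_le_of_lt (hanti (Set.left_mem_Icc.2 ht₀t₁.le) hx hx.1) hf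
  -- g = 1/f - t/k is monotone on [t₀, t₁]
  set g : ℝ → ℝ := fun t => (f t)⁻¹ - t / k with hgdef
  have hgderiv : ∀ x ∈ Set.Icc t₀ t₁,
      HasDerivAt g (-(deriv f x) / (f x) ^ 2 - 1 / k) x := by
    intro x hx
    have hfx : f x ≠ 0 := (hfneg x hx).ne
    have h1 : HasDerivAt f (deriv f x) x := (hdiff x (hsub hx)).hasDerivAt
    have h2 := h1.inv hfx
    have h3 : HasDerivAt (fun t : ℝ => t / k) (1 / k) x := by
      simpa using (hasDerivAt_id x).div_const k
    exact h2.sub h3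
  have hmono : MonotoneOn g (Set.Icc t₀ t₁) := by
    apply monotoneOn_of_deriv_nonneg (convex_Icc _ _)
    · intro x hx
      exact ((hgderiv x hx).continuousAt).continuousWithinAt
    · intro x hx
      rw [interior_Icc] at hx
      exact ((hgderiv x (Set.Ioo_subset_Icc_self hx)).differentiableAt).differentiableWithinAt
    · intro x hx
      rw [interior_Icc] at hx
      have hx' := Set.Ioo_subset_Icc_self hx
      rw [(hgderiv x hx').deriv]
      have hm := hsub hx'
      have h1 := hineq x hm
      have h2 := hσ x hm
      have hfx : f x ≠ 0 := (hfneg x hx').ne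
      have hsq : 0 < (f x) ^ 2 := by positivity
      rw [sub_nonneg, div_le_div_iff₀ hk hsq]
      have hc : f x ^ 2 / k * k = f x ^ 2 := div_mul_cancel₀ _ hk.ne'
      nlinarith [mul_le_mul_of_nonneg_right h1 hk.le, mul_nonneg h2 hk.le]
  have hmem₁ : t₁ ∈ Set.Icc t₀ t₁ := Set.right_mem_Icc.2 ht₀t₁.le
  have hmem₀ : t₀ ∈ Set.Icc t₀ t₁ := Set.left_mem_Icc.2 ht₀t₁.le
  have hG := hmono hmem₀ hmem₁ ht₀t₁.le
  have hft₁ : (f t₁)⁻¹ < 0 := inv_lt_zero.2 (hfneg t₁ hmem₁)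
  -- g t₀ ≤ g t₁ gives (t₁ - t₀)/k ≤ (f t₁)⁻¹ - (f t₀)⁻¹
  have key : (t₁ - t₀) / k ≤ (f t₁)⁻¹ - (f t₀)⁻¹ := by
    simp only [hgdef] at hG
    have := sub_div t₁ t₀ k
    linarith [hG, (sub_div t₁ t₀ k)]
  have he : (t₁ - t₀) / k = -(f t₀)⁻¹ := by
    simp only [ht₁def]
    rw [add_sub_cancel_left, div_right_comm, div_self hk.ne', one_div, inv_neg]
  rw [he] at key
  linarith
end
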